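/- For all integers n ≥ 2 and m ≥ n, there exist a profile (v_1, …, v_n) of normalized, monotone, XOS valuations over G = {g_1, …, g_m} and an additive misreport v_1' for agent 1 such that, under Mechanism 2 (Round-Robin for general valuations), agent 1's truthful utility is exactly 1 while the bundle he receives after misreporting v_1' has v_1-value exactly ⌈m/n⌉. Hence the incentive ratio of Mechanism 2 for XOS valuations is at least ⌈m/n⌉. -/

import Mathlib

/-- A valuation: normalized and monotone set function on goods. -/
def IsValuation {m : ℕ} (v : Finset (Fin m) → ℝ) : Prop :=
  v ∅ = 0 ∧ ∀ S T : Finset (Fin m), S ⊆ T → v S ≤ v T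

def AdditiveVal {m : ℕ} (v : Finset (Fin m) → ℝ) : Prop :=
  ∀ S T : Finset (Fin m), Disjoint S T → v (S ∪ T) = v S + v T

def SubadditiveVal {m : ℕ} (v : Finset (Fin m) → ℝ) : Prop :=
  ∀ S T : Finset (Fin m), v (S ∪ T) ≤ v S + v T

def CancelableVal {m : ℕ} (v : Finset (Fin m) → ℝ) : Prop :=
  ∀ S T : Finset (Fin m), ∀ g : Fin m, g ∉ S ∪ T → v (insert g S) > v (insert g T) → v S > v T

def SubmodularVal {m : ℕ} (v : Finset (Fin m) → ℝ) : Prop :=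
  ∀ S T : Finset (Fin m), S ⊆ T → ∀ g : Fin m, g ∉ T →
    v (insert g T) - v T ≤ v (insert g S) - v S

def MultiplicativeVal {m : ℕ} (v : Finset (Fin m) → ℝ) : Prop :=
  (∀ g : Fin m, 1 ≤ v {g}) ∧ ∀ S : Finset (Fin m), S.Nonempty → v S = ∏ g ∈ S, v {g}

def XOSVal {m : ℕ} (v : Finset (Fin m) → ℝ) : Prop :=
  ∃ (k : ℕ) (f : Fin (k + 1) → Finset (Fin m) → ℝ),
    (∀ j, AdditiveVal (f j)) ∧
    ∀ S : Finset (Fin m), (∃ j, v S = f j S) ∧ ∀ j, f j S ≤ v S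

def IsAllocation {n m : ℕ} (A : Fin n → Finset (Fin m)) : Prop :=
  (∀ i j : Fin n, i ≠ j → Disjoint (A i) (A j)) ∧ ∀ g : Fin m, ∃ i, g ∈ A i

/-- `α`-EF1. -/
def EF1 {n m : ℕ} (α : ℝ) (v : Fin n → Finset (Fin m) → ℝ) (A : Fin n → Finset (Fin m)) : Prop :=
  ∀ i j : Fin n, A j = ∅ ∨ ∃ g ∈ A j, α * v i (A j \ {g}) ≤ v i (A i)

/-- The remaining good maximizing `f`, ties broken in favor of the smallest index. -/
noncomputable def chooseFavorite {m : ℕ} (f : Fin m → ℝ) (S : Finset (Fin m))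
    (h : S.Nonempty) : Fin m :=
  (S.filter fun g => ∀ h' ∈ S, f h' ≤ f g).min' (by
    obtain ⟨b, hb, hmax⟩ := S.exists_max_image f h
    exact ⟨b, Finset.mem_filter.mpr ⟨hb, hmax⟩⟩)

/-- The state (bundles, remaining goods) of round-robin after `k` stages, where at stage
`k+1` the agent `k % n` picks a remaining good maximizing `score i (current bundle of i)`,
ties broken towards the smallest index. -/
noncomputable def rrState {n m : ℕ} (score : Fin n → Finset (Fin m) → Fin m → ℝ) :
    ℕ → (Fin n → Finset (Fin m)) × Finset (Fin m)
  | 0 => (fun _ => (∅ : Finset (Fin m)), Finset.univ)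
  | k + 1 =>
      let st := rrState score k
      if hn : 0 < n then
        if h : st.2.Nonempty then
          let i : Fin n := ⟨k % n, Nat.mod_lt k hn⟩
          let g := chooseFavorite (score i (st.1 i)) st.2 h
          (Function.update st.1 i (insert g (st.1 i)), st.2.erase g)
        else st
      else st

/-- Mechanism 1: Round-Robin where each agent picks a remaining good of largest value. -/
noncomputable def roundRobin1 {n m : ℕ} (v : Fin n → Finset (Fin m) → ℝ) :
    Fin n → Finset (Fin m) :=
  (rrState (fun i _ g => v i {g}) m).1

/-- Mechanism 2: Round-Robin where each agent picks a remaining good of largest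
marginal value with respect to his current bundle. -/
noncomputable def roundRobin2 {n m : ℕ} (v : Fin n → Finset (Fin m) → ℝ) :
    Fin n → Finset (Fin m) :=
  (rrState (fun i A g => v i (insert g A) - v i A) m).1

noncomputable def expTransform {m : ℕ} (δ : ℝ) (v : Finset (Fin m) → ℝ) :
    Finset (Fin m) → ℝ :=
  fun S => if S = ∅ then 0 else Real.exp (δ * v S)

def addVal {m : ℕ} (w : Fin m → ℝ) : Finset (Fin m) → ℝ := fun S => ∑ g ∈ S, w g

def Envies {n m : ℕ} (v : Fin n → Finset (Fin m) → ℝ) (A : Fin n → Finset (Fin m))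
    (i j : Fin n) : Prop :=
  v i (A i) < v i (A j)

def Unenvied {n m : ℕ} (v : Fin n → Finset (Fin m) → ℝ) (A : Fin n → Finset (Fin m))
    (j : Fin n) : Prop :=
  ∀ i : Fin n, ¬ Envies v A i j

def EnvyCycleStep {n m : ℕ} (v : Fin n → Finset (Fin m) → ℝ)
    (A A' : Fin n → Finset (Fin m)) : Prop :=
  ∃ σ : Equiv.Perm (Fin n), σ.IsCycle ∧ (∀ i, σ i ≠ i → Envies v A i (σ i)) ∧
    ∀ i, A' i = A (σ i)

def HasEnvyCycle {n m : ℕ} (v : Fin n → Finset (Fin m) → ℝ)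
    (A : Fin n → Finset (Fin m)) : Prop :=
  ∃ σ : Equiv.Perm (Fin n), σ.IsCycle ∧ ∀ i, σ i ≠ i → Envies v A i (σ i)

def Eliminated {n m : ℕ} (v : Fin n → Finset (Fin m) → ℝ)
    (A B : Fin n → Finset (Fin m)) : Prop :=
  Relation.ReflTransGen (EnvyCycleStep v) A B ∧ ¬ HasEnvyCycle v B

inductive EGP {n m : ℕ} (v : Fin n → Finset (Fin m) → ℝ) :
    ℕ → (Fin n → Finset (Fin m)) → Prop
  | init : EGP v 0 (fun _ => ∅)
  | step {k : ℕ} (hk : k < m) {A C : Fin n → Finset (Fin m)} (j : Fin n) :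
      EGP v k A → Unenvied v A j → (∀ j' : Fin n, Unenvied v A j' → j ≤ j') →
      Eliminated v (Function.update A j (insert ⟨k, hk⟩ (A j))) C →
      EGP v (k + 1) C

inductive EGP2 {n m : ℕ} (v : Fin n → Finset (Fin m) → ℝ) :
    ℕ → (Fin n → Finset (Fin m)) → Finset (Fin m) → Prop
  | init : EGP2 v 0 (fun _ => ∅) Finset.univ
  | step {k : ℕ} {A C : Fin n → Finset (Fin m)} {S : Finset (Fin m)} (j : Fin n) (g : Fin m) :
      EGP2 v k A S → Unenvied v A j → (∀ j' : Fin n, Unenvied v A j' → j ≤ j') →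
      g ∈ S → (∀ h ∈ S, v j {h} ≤ v j {g}) → (∀ h ∈ S, v j {g} ≤ v j {h} → g ≤ h) →
      Eliminated v (Function.update A j (insert g (A j))) C →
      EGP2 v (k + 1) C (S.erase g)

namespace RRX
open Finset

/- ## Generic lemmas about the mechanism -/

lemma chooseFavorite_eq {m : ℕ} {f : Fin m → ℝ} {S : Finset (Fin m)} {h : S.Nonempty} {g0 : Fin m}
    (hg0 : g0 ∈ S) (hmax : ∀ g ∈ S, f g ≤ f g0)
    (hmin : ∀ g ∈ S, (∀ g' ∈ S, f g' ≤ f g) → g0 ≤ g) :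
    chooseFavorite f S h = g0 := by
  unfold chooseFavorite
  apply le_antisymm
  · exact Finset.min'_le _ _ (Finset.mem_filter.mpr ⟨hg0, hmax⟩)
  · apply Finset.le_min'
    intro y hy
    rw [Finset.mem_filter] at hy
    exact hmin y hy.1 hy.2

lemma rrState_succ {n m : ℕ} (score : Fin n → Finset (Fin m) → Fin m → ℝ) (s : ℕ)
    (hn : 0 < n) (h : (rrState score s).2.Nonempty) :
    rrState score (s + 1) =
      (Function.update (rrState score s).1 ⟨s % n, Nat.mod_lt s hn⟩
        (insert
          (chooseFavorite
            (score ⟨s % n, Nat.mod_lt s hn⟩ ((rrState score s).1 ⟨s % n, Nat.mod_lt s hn⟩))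
            (rrState score s).2 h)
          ((rrState score s).1 ⟨s % n, Nat.mod_lt s hn⟩)),
       (rrState score s).2.erase
        (chooseFavorite
          (score ⟨s % n, Nat.mod_lt s hn⟩ ((rrState score s).1 ⟨s % n, Nat.mod_lt s hn⟩))
          (rrState score s).2 h)) := by
  rw [rrState]
  simp only [dif_pos hn, dif_pos h]

/- ## Arithmetic helpers -/

lemma adiv_le_self (n s : ℕ) (hn : 0 < n) : (s + n - 1) / n ≤ s := by
  rcases Nat.eq_zero_or_pos s with h | h
  · subst h; simp [Nat.div_eq_of_lt (by omega : n - 1 < n)]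
  · have h1 : s + n - 1 ≤ n * s + (n - 1) := by
      have := Nat.le_mul_of_pos_left s hn
      omega
    exact (Nat.div_le_iff_le_mul_add_pred hn).mpr h1

lemma s_le_n_mul_adiv (n s : ℕ) (hn : 0 < n) : s ≤ n * ((s + n - 1) / n) := by
  have h := Nat.div_add_mod (s + n - 1) n
  have h2 : (s + n - 1) % n < n := Nat.mod_lt _ hn
  omega

lemma adiv_succ_le (n s : ℕ) (hn : 0 < n) :
    (s + 1 + n - 1) / n ≤ (s + n - 1) / n + 1 := by
  have h1 : (s + 1 + n - 1) ≤ (s + n - 1) + n := by omega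
  calc (s + 1 + n - 1) / n ≤ ((s + n - 1) + n) / n := Nat.div_le_div_right h1
    _ = (s + n - 1) / n + 1 := Nat.add_div_right _ hn

lemma adiv_mono (n s t : ℕ) (h : s ≤ t) : (s + n - 1) / n ≤ (t + n - 1) / n :=
  Nat.div_le_div_right (by omega)

lemma adiv_pick (n s : ℕ) (hn : 0 < n) (hmod : s % n = 0) :
    n * ((s + n - 1) / n) = s ∧ (s + 1 + n - 1) / n = (s + n - 1) / n + 1 := by
  obtain ⟨k, hk⟩ : ∃ k, s = n * k := by
    have h := Nat.div_add_mod s n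
    exact ⟨s / n, by omega⟩
  subst hk
  have e1 : (n * k + n - 1) / n = k := by
    have h : n * k + n - 1 = n * k + (n - 1) := by omega
    rw [h, Nat.mul_add_div hn, Nat.div_eq_of_lt (by omega : n - 1 < n)]
    omega
  have e2 : (n * k + 1 + n - 1) / n = k + 1 := by
    have h : n * k + 1 + n - 1 = n * k + n := by omega
    rw [h, Nat.mul_add_div hn, Nat.div_self hn]
  exact ⟨by rw [e1], by rw [e1, e2]⟩

lemma adiv_other (n s : ℕ) (hn : 0 < n) (hmod : s % n ≠ 0) :
    (s + 1 + n - 1) / n = (s + n - 1) / n := by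
  obtain ⟨k, r, hr1, hr2, hk⟩ : ∃ k r, 1 ≤ r ∧ r < n ∧ s = n * k + r := by
    have h := Nat.div_add_mod s n
    exact ⟨s / n, s % n, by omega, Nat.mod_lt _ hn, by omega⟩
  subst hk
  have e1 : (n * k + r + n - 1) / n = k + 1 := by
    have h : n * k + r + n - 1 = n * (k + 1) + (r - 1) := by
      have : n * (k + 1) = n * k + n := by ring
      omega
    rw [h, Nat.mul_add_div hn, Nat.div_eq_of_lt (by omega : r - 1 < n)]
  have e2 : (n * k + r + 1 + n - 1) / n = k + 1 := by
    have h : n * k + r + 1 + n - 1 = n * (k + 1) + r := by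
      have : n * (k + 1) = n * k + n := by ring
      omega
    rw [h, Nat.mul_add_div hn, Nat.div_eq_of_lt hr2]
  omega

lemma bfun_mono (n : ℕ) (hn : 0 < n) : Monotone (fun s => s - (s + n - 1) / n) := by
  apply monotone_nat_of_le_succ
  intro s
  have h1 := adiv_succ_le n s hn
  have h2 := adiv_le_self n s hn
  show s - (s + n - 1) / n ≤ (s + 1) - (s + 1 + n - 1) / n
  omega

/- ## The set H of goods -/

def hN (n m t : ℕ) : ℕ := min ((t + 1) * n) m - 1

def hF (n : ℕ) {m : ℕ} (hm0 : 0 < m) (t : ℕ) : Fin m := ⟨hN n m t, by unfold hN; omega⟩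

def Hs (n q : ℕ) {m : ℕ} (hm0 : 0 < m) : Finset (Fin m) := (range q).image (hF n hm0)

variable {n m q : ℕ}

lemma hN_eq_of {t : ℕ} (h : (t + 1) * n ≤ m) : hN n m t = (t + 1) * n - 1 := by
  rw [hN, min_eq_left h]

lemma hN_eq_last {t : ℕ} (h : m ≤ (t + 1) * n) : hN n m t = m - 1 := by
  rw [hN, min_eq_right h]

lemma hN_lt (hn : 2 ≤ n) (hq2 : q * n < m + n) {t t' : ℕ} (h : t' < t) (ht : t < q) :
    hN n m t' < hN n m t := by
  have e2 : (t + 1) * n ≤ q * n := Nat.mul_le_mul_right n (by omega)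
  have e3 : (t' + 2) * n ≤ (t + 1) * n := Nat.mul_le_mul_right n (by omega)
  have e5 : (t' + 2) * n = (t' + 1) * n + n := by ring
  have e4 : n ≤ (t' + 1) * n := Nat.le_mul_of_pos_left n (by omega)
  have h1 : (t' + 1) * n ≤ m := by omega
  rw [hN_eq_of h1, hN]
  rcases le_total ((t + 1) * n) m with h2 | h2
  · rw [min_eq_left h2]; omega
  · rw [min_eq_right h2]; omega

lemma hN_le (hn : 2 ≤ n) (hq2 : q * n < m + n) {t t' : ℕ} (h : t' ≤ t) (ht : t < q) :
    hN n m t' ≤ hN n m t := by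
  rcases eq_or_lt_of_le h with rfl | h'
  · exact le_rfl
  · exact le_of_lt (hN_lt hn hq2 h' ht)

lemma hN_lt_m (t : ℕ) (hm0 : 0 < m) : hN n m t < m := by
  rw [hN]
  rcases le_total ((t + 1) * n) m with h2 | h2
  · rw [min_eq_left h2]
    have : 0 < (t + 1) * n ∨ (t + 1) * n = 0 := by omega
    omega
  · rw [min_eq_right h2]; omega

lemma hN_ge (hmn : n ≤ m) (t : ℕ) : n - 1 ≤ hN n m t := by
  have e4 : n ≤ (t + 1) * n := Nat.le_mul_of_pos_left n (by omega)
  rw [hN]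
  rcases le_total ((t + 1) * n) m with h2 | h2
  · rw [min_eq_left h2]; omega
  · rw [min_eq_right h2]; omega

lemma hF_injOn (hn : 2 ≤ n) (hq2 : q * n < m + n) (hm0 : 0 < m) :
    Set.InjOn (hF n hm0) (range q) := by
  intro a ha b hb hab
  simp only [coe_range, Set.mem_Iio] at ha hb
  by_contra hne
  rcases Nat.lt_or_ge a b with h | h
  · have h2 : (hF n hm0 a).val < (hF n hm0 b).val := hN_lt hn hq2 h hb
    rw [hab] at h2; omega
  · have h' : b < a := by omega
    have h2 : (hF n hm0 b).val < (hF n hm0 a).val := hN_lt hn hq2 h' ha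
    rw [hab] at h2; omega

lemma card_Hs (hn : 2 ≤ n) (hq2 : q * n < m + n) (hm0 : 0 < m) : (Hs n q hm0).card = q := by
  rw [Hs, card_image_of_injOn (hF_injOn hn hq2 hm0), card_range]

lemma mem_Hs_mod (hn : 2 ≤ n) (hq1 : m ≤ q * n) (hq2 : q * n < m + n) (hm0 : 0 < m)
    {g : Fin m} (hg : g ∈ Hs n q hm0) (hmod : g.val % n = 0) : g.val = m - 1 := by
  rw [Hs, mem_image] at hg
  obtain ⟨t, ht, rfl⟩ := hg
  rw [mem_range] at ht
  by_cases hc : t + 1 < q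
  · exfalso
    have h1 : (t + 2) * n ≤ q * n := Nat.mul_le_mul_right n (by omega)
    have h2 : (t + 2) * n = (t + 1) * n + n := by ring
    have h3 : (t + 1) * n ≤ m := by omega
    have hval : (hF n hm0 t).val = (t + 1) * n - 1 := hN_eq_of h3
    rw [hval] at hmod
    have e4 : n ≤ (t + 1) * n := Nat.le_mul_of_pos_left n (by omega)
    have e : (t + 1) * n - 1 = n * t + (n - 1) := by
      have : (t + 1) * n = n * t + n := by ring
      omega
    rw [e, Nat.mul_add_mod, Nat.mod_eq_of_lt (by omega : n - 1 < n)] at hmod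
    omega
  · have ht' : t + 1 = q := by omega
    show hN n m t = m - 1
    apply hN_eq_last
    rw [ht']; exact hq1

lemma zero_not_mem_Hs (hn : 2 ≤ n) (hmn : n ≤ m) (hm0 : 0 < m) :
    (⟨0, hm0⟩ : Fin m) ∉ Hs n q hm0 := by
  intro hmem
  rw [Hs, mem_image] at hmem
  obtain ⟨t, _, ht⟩ := hmem
  have h1 : n - 1 ≤ hN n m t := hN_ge hmn t
  have h2 := congrArg Fin.val ht
  simp only [hF] at h2
  omega

lemma mem_Hs_of (hm0 : 0 < m) {t : ℕ} (ht : t < q) : hF n hm0 t ∈ Hs n q hm0 :=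
  mem_image_of_mem _ (mem_range.mpr ht)

lemma Hs_filter_lt (hn : 2 ≤ n) (hq2 : q * n < m + n) (hm0 : 0 < m) {a : ℕ} (ha : a < q) :
    (Hs n q hm0).filter (fun g => g.val < hN n m a) = (range a).image (hF n hm0) := by
  ext g
  simp only [mem_filter, Hs, mem_image, mem_range]
  constructor
  · rintro ⟨⟨t, ht, rfl⟩, hlt⟩
    refine ⟨t, ?_, rfl⟩
    by_contra hc
    have h2 : hN n m a ≤ hN n m t := hN_le hn hq2 (by omega) ht
    have hv : (hF n hm0 t).val = hN n m t := rfl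
    rw [hv] at hlt
    omega
  · rintro ⟨t, ht, rfl⟩
    exact ⟨⟨t, by omega, rfl⟩, hN_lt hn hq2 (by omega) ha⟩

/- ## The valuations -/

def wH (n q : ℕ) {m : ℕ} (hm0 : 0 < m) : Fin m → ℝ := fun g => if g ∈ Hs n q hm0 then 1 else 0

def w0 {m : ℕ} (hm0 : 0 < m) : Fin m → ℝ := fun g => if g = ⟨0, hm0⟩ then 1 else 0

def v1 (n q : ℕ) {m : ℕ} (hm0 : 0 < m) : Finset (Fin m) → ℝ :=
  fun S => max (addVal (w0 hm0) S) (addVal (wH n q hm0) S)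

def prof (q : ℕ) {n m : ℕ} (hn0 : 0 < n) (hm0 : 0 < m) :
    Fin n → Finset (Fin m) → ℝ :=
  fun j => if j = ⟨0, hn0⟩ then v1 n q hm0 else fun _ => 0

lemma addVal_wH (hm0 : 0 < m) (S : Finset (Fin m)) :
    addVal (wH n q hm0) S = ((S.filter (· ∈ Hs n q hm0)).card : ℝ) := by
  simp only [addVal, wH]
  rw [Finset.sum_boole]

lemma addVal_w0 (hm0 : 0 < m) (S : Finset (Fin m)) :
    addVal (w0 hm0) S = if (⟨0, hm0⟩ : Fin m) ∈ S then (1:ℝ) else 0 := by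
  simp only [addVal, w0]
  rw [Finset.sum_ite_eq' S (⟨0, hm0⟩ : Fin m) (fun _ => (1:ℝ))]

lemma addVal_additive (w : Fin m → ℝ) : AdditiveVal (addVal w) := by
  intro S T h
  rw [addVal, Finset.sum_union h]
  rfl

lemma addVal_mono {w : Fin m → ℝ} (hw : ∀ g, 0 ≤ w g) {S T : Finset (Fin m)} (h : S ⊆ T) :
    addVal w S ≤ addVal w T :=
  Finset.sum_le_sum_of_subset_of_nonneg h (fun g _ _ => hw g)

lemma v1_isValuation (hm0 : 0 < m) : IsValuation (v1 n q hm0) := by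
  constructor
  · rw [v1]; simp [addVal]
  · intro S T h
    have h0 : ∀ g, (0:ℝ) ≤ w0 (m := m) hm0 g := by intro g; rw [w0]; positivity
    have hh : ∀ g, (0:ℝ) ≤ wH n q hm0 g := by intro g; rw [wH]; positivity
    exact max_le_max (addVal_mono h0 h) (addVal_mono hh h)

lemma v1_xos (hm0 : 0 < m) : XOSVal (v1 n q hm0) := by
  refine ⟨1, ![addVal (w0 hm0), addVal (wH n q hm0)], ?_, ?_⟩
  · intro j; fin_cases j <;> exact addVal_additive _
  · intro S
    constructor
    · rcases max_choice (addVal (w0 hm0) S) (addVal (wH n q hm0) S) with h | h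
      · exact ⟨0, h⟩
      · exact ⟨1, h⟩
    · intro j; fin_cases j
      · exact le_max_left _ _
      · exact le_max_right _ _

lemma zero_isValuation : IsValuation (fun _ : Finset (Fin m) => (0:ℝ)) :=
  ⟨rfl, fun _ _ _ => le_rfl⟩

lemma zero_xos : XOSVal (fun _ : Finset (Fin m) => (0:ℝ)) := by
  refine ⟨0, fun _ => fun _ => 0, ?_, ?_⟩
  · intro _ _ _ _; norm_num
  · intro S; exact ⟨⟨⟨0, Nat.zero_lt_one⟩, rfl⟩, fun _ => le_rfl⟩

lemma wH_le_one (hm0 : 0 < m) (g : Fin m) : wH n q hm0 g ≤ 1 := by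
  rw [wH]; split <;> norm_num

lemma card_filter_singleton_le (A : Finset (Fin m)) (P : Fin m → Prop) [DecidablePred P]
    (x : Fin m) (h : ∀ y ∈ A, P y → y = x) : (A.filter P).card ≤ 1 := by
  have hsub : A.filter P ⊆ {x} := by
    intro y hy
    rw [Finset.mem_filter] at hy
    rw [Finset.mem_singleton]
    exact h y hy.1 hy.2
  calc (A.filter P).card ≤ ({x} : Finset (Fin m)).card := Finset.card_le_card hsub
    _ = 1 := Finset.card_singleton x

lemma v1_eq_one (hm0 : 0 < m) {A : Finset (Fin m)}
    (hmem : (⟨0, hm0⟩ : Fin m) ∈ A)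
    (hcard : ((A.filter (· ∈ Hs n q hm0)).card ≤ 1)) :
    v1 n q hm0 A = 1 := by
  rw [v1, addVal_w0, if_pos hmem, addVal_wH]
  rw [max_eq_left]
  exact_mod_cast hcard

lemma v1_singleton_le (hm0 : 0 < m) (g : Fin m) : v1 n q hm0 {g} ≤ 1 := by
  rw [v1, addVal_w0, addVal_wH]
  apply max_le
  · split <;> norm_num
  · have : (({g} : Finset (Fin m)).filter (· ∈ Hs n q hm0)).card ≤ 1 :=
      card_filter_singleton_le _ _ g (fun y hy _ => Finset.mem_singleton.mp hy)
    exact_mod_cast this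

lemma v1_zero_singleton (hm0 : 0 < m) : v1 n q hm0 {⟨0, hm0⟩} = 1 :=
  v1_eq_one hm0 (Finset.mem_singleton_self _)
    (card_filter_singleton_le _ _ ⟨0, hm0⟩ (fun y hy _ => Finset.mem_singleton.mp hy))

lemma v1_empty (hm0 : 0 < m) : v1 n q hm0 ∅ = 0 := (v1_isValuation hm0).1

lemma v1_Hs_eq (hn : 2 ≤ n) (hmn : n ≤ m) (hq2 : q * n < m + n) (hm0 : 0 < m) :
    v1 n q hm0 (Hs n q hm0) = (q : ℝ) := by
  rw [v1, addVal_w0, if_neg (zero_not_mem_Hs hn hmn hm0), addVal_wH]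
  rw [Finset.filter_true_of_mem (fun x hx => hx), card_Hs hn hq2 hm0]
  exact max_eq_right (by positivity)

end RRX
namespace RRX
open Finset

lemma truthful_run {n m q : ℕ} (hn : 2 ≤ n) (hmn : n ≤ m) (hq1 : m ≤ q * n)
    (hq2 : q * n < m + n) (hn0 : 0 < n) (hm0 : 0 < m) :
    ∀ s, s ≤ m →
      (rrState (fun i A g => prof q hn0 hm0 i (insert g A) - prof q hn0 hm0 i A) s).2
          = univ.filter (fun g : Fin m => s ≤ g.val) ∧
      (rrState (fun i A g => prof q hn0 hm0 i (insert g A) - prof q hn0 hm0 i A) s).1 ⟨0, hn0⟩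
          = univ.filter (fun g : Fin m => g.val < s ∧ g.val % n = 0) := by
  set F : Fin n → Finset (Fin m) → Fin m → ℝ :=
    fun i A g => prof q hn0 hm0 i (insert g A) - prof q hn0 hm0 i A with hFdef
  intro s
  induction s with
  | zero =>
    intro _
    constructor
    · rw [rrState]; ext g; simp
    · rw [rrState]; ext g; simp
  | succ s ih =>
    intro hs1
    have hsm : s < m := hs1
    obtain ⟨h2, h1⟩ := ih (le_of_lt hsm)
    have hne : (rrState F s).2.Nonempty := by
      rw [h2]; exact ⟨⟨s, hsm⟩, mem_filter.mpr ⟨mem_univ _, le_rfl⟩⟩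
    rw [rrState_succ F s hn0 hne]
    have hpick : chooseFavorite
        (F ⟨s % n, Nat.mod_lt s hn0⟩ ((rrState F s).1 ⟨s % n, Nat.mod_lt s hn0⟩))
        (rrState F s).2 hne = ⟨s, hsm⟩ := by
      by_cases hmod : s % n = 0
      · have hi : (⟨s % n, Nat.mod_lt s hn0⟩ : Fin n) = ⟨0, hn0⟩ := Fin.ext hmod
        rw [hi, h1]
        by_cases hs0 : s = 0
        · -- first stage: agent 0 picks good 0
          subst hs0
          have hAe : univ.filter (fun g : Fin m => g.val < 0 ∧ g.val % n = 0) = ∅ := by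
            ext g; simp
          rw [hAe]
          have hsc : ∀ g : Fin m, F ⟨0, hn0⟩ ∅ g = v1 n q hm0 {g} := by
            intro g
            show prof q hn0 hm0 ⟨0, hn0⟩ (insert g ∅) - prof q hn0 hm0 ⟨0, hn0⟩ ∅ = _
            rw [prof, if_pos rfl, LawfulSingleton.insert_empty_eq, v1_empty hm0, sub_zero]
          apply chooseFavorite_eq
          · rw [h2]; exact mem_filter.mpr ⟨mem_univ _, Nat.zero_le _⟩
          · intro g _
            rw [hsc, hsc]
            calc v1 n q hm0 {g} ≤ 1 := v1_singleton_le hm0 g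
              _ = v1 n q hm0 {⟨0, hm0⟩} := (v1_zero_singleton hm0).symm
          · intro g _ _
            show (⟨0, hm0⟩ : Fin m) ≤ g
            exact Fin.mk_le_of_le_val (Nat.zero_le _)
        · -- later stages of agent 0: all marginal values are 0
          have hs1' : 1 ≤ s := by omega
          set A : Finset (Fin m) := univ.filter (fun g : Fin m => g.val < s ∧ g.val % n = 0)
            with hAdef
          have hmemA : (⟨0, hm0⟩ : Fin m) ∈ A := by
            rw [hAdef]; exact mem_filter.mpr ⟨mem_univ _, by simp; omega⟩
          have hAH : ∀ y ∈ A, y ∈ Hs n q hm0 → False := by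
            intro y hy hyH
            rw [hAdef, mem_filter] at hy
            have := mem_Hs_mod hn hq1 hq2 hm0 hyH hy.2.2
            omega
          have hv1A : v1 n q hm0 A = 1 :=
            v1_eq_one hm0 hmemA
              (card_filter_singleton_le _ _ ⟨0, hm0⟩ (fun y hy hyH => absurd hyH
                (fun h => hAH y hy h)))
          have hv1Ai : ∀ g : Fin m, v1 n q hm0 (insert g A) = 1 := by
            intro g
            apply v1_eq_one hm0 (mem_insert_of_mem hmemA)
            apply card_filter_singleton_le _ _ g
            intro y hy hyH
            rcases mem_insert.mp hy with h | h
            · exact h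
            · exact absurd hyH (fun hh => hAH y h hh)
          have hsc : ∀ g : Fin m, F ⟨0, hn0⟩ A g = 0 := by
            intro g
            show prof q hn0 hm0 ⟨0, hn0⟩ (insert g A) - prof q hn0 hm0 ⟨0, hn0⟩ A = 0
            rw [prof, if_pos rfl, hv1Ai, hv1A, sub_self]
          apply chooseFavorite_eq
          · rw [h2]; exact mem_filter.mpr ⟨mem_univ _, le_rfl⟩
          · intro g _; rw [hsc, hsc]
          · intro g hg _
            rw [h2, mem_filter] at hg
            exact Fin.mk_le_of_le_val hg.2
      · -- another agent's turn: zero valuation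
        have hsc : ∀ g : Fin m,
            F ⟨s % n, Nat.mod_lt s hn0⟩ ((rrState F s).1 ⟨s % n, Nat.mod_lt s hn0⟩) g = 0 := by
          intro g
          have hine : (⟨s % n, Nat.mod_lt s hn0⟩ : Fin n) ≠ ⟨0, hn0⟩ := by
            intro hcon
            exact hmod (congrArg Fin.val hcon)
          show prof q hn0 hm0 _ _ - prof q hn0 hm0 _ _ = 0
          rw [prof, if_neg hine, sub_self]
        apply chooseFavorite_eq
        · rw [h2]; exact mem_filter.mpr ⟨mem_univ _, le_rfl⟩
        · intro g _; rw [hsc, hsc]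
        · intro g hg _
          rw [h2, mem_filter] at hg
          exact Fin.mk_le_of_le_val hg.2
    rw [hpick]
    constructor
    · show (rrState F s).2.erase ⟨s, hsm⟩ = _
      rw [h2]
      ext g
      simp only [mem_erase, mem_filter, mem_univ, true_and]
      constructor
      · rintro ⟨hne', hle⟩
        rcases Nat.lt_or_ge s g.val with h | h
        · omega
        · exact absurd (Fin.ext (by omega : g.val = s)) hne'
      · intro hge
        refine ⟨?_, by omega⟩
        intro hcon
        have hval := congrArg Fin.val hcon
        simp only [] at hval
        omega
    · dsimp only
      by_cases hmod : s % n = 0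
      · have hi : (⟨s % n, Nat.mod_lt s hn0⟩ : Fin n) = ⟨0, hn0⟩ := Fin.ext hmod
        rw [hi, Function.update_self, h1]
        ext g
        simp only [mem_insert, mem_filter, mem_univ, true_and, Fin.ext_iff]
        constructor
        · rintro (h | ⟨ha, hb⟩)
          · refine ⟨by omega, ?_⟩
            have : g.val = s := h
            rw [this]; exact hmod
          · exact ⟨by omega, hb⟩
        · rintro ⟨ha, hb⟩
          by_cases hgs : g.val = s
          · exact Or.inl hgs
          · exact Or.inr ⟨by omega, hb⟩
      · have hine : (⟨0, hn0⟩ : Fin n) ≠ ⟨s % n, Nat.mod_lt s hn0⟩ := by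
          intro hcon
          exact hmod (congrArg Fin.val hcon).symm
        rw [Function.update_of_ne hine, h1]
        ext g
        simp only [mem_filter, mem_univ, true_and]
        constructor
        · rintro ⟨ha, hb⟩; exact ⟨by omega, hb⟩
        · rintro ⟨ha, hb⟩
          refine ⟨?_, hb⟩
          by_cases hgs : g.val = s
          · exfalso; rw [hgs] at hb; exact hmod hb
          · omega

end RRX
namespace RRX
open Finset

lemma misreport_run {n m q : ℕ} (hn : 2 ≤ n) (hmn : n ≤ m) (hq1 : m ≤ q * n)
    (hq2 : q * n < m + n) (hq : (m + n - 1) / n = q) (hn0 : 0 < n) (hm0 : 0 < m) :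
    ∀ s, s ≤ m →
      ∃ N : Finset (Fin m),
        (∀ g ∈ N, g ∉ Hs n q hm0) ∧
        N.card + (s - (s + n - 1) / n) = m - q ∧
        (∀ x : Fin m, x ∉ Hs n q hm0 → ∀ y ∈ N, y ≤ x → x ∈ N) ∧
        (rrState (fun i A g =>
            Function.update (prof q hn0 hm0) ⟨0, hn0⟩ (addVal (wH n q hm0)) i (insert g A) -
            Function.update (prof q hn0 hm0) ⟨0, hn0⟩ (addVal (wH n q hm0)) i A) s).1 ⟨0, hn0⟩
          = (range ((s + n - 1) / n)).image (hF n hm0) ∧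
        (rrState (fun i A g =>
            Function.update (prof q hn0 hm0) ⟨0, hn0⟩ (addVal (wH n q hm0)) i (insert g A) -
            Function.update (prof q hn0 hm0) ⟨0, hn0⟩ (addVal (wH n q hm0)) i A) s).2
          = ((Ico ((s + n - 1) / n) q).image (hF n hm0)) ∪ N := by
  set V : Fin n → Finset (Fin m) → ℝ :=
    Function.update (prof q hn0 hm0) ⟨0, hn0⟩ (addVal (wH n q hm0)) with hVdef
  set F : Fin n → Finset (Fin m) → Fin m → ℝ :=
    fun i A g => V i (insert g A) - V i A with hFdef
  intro s
  induction s with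
  | zero =>
    intro _
    have ha0 : (0 + n - 1) / n = 0 := Nat.div_eq_of_lt (by omega)
    refine ⟨(Hs n q hm0)ᶜ, ?_, ?_, ?_, ?_, ?_⟩
    · intro g hg; exact mem_compl.mp hg
    · rw [ha0, card_compl, card_Hs hn hq2 hm0, Fintype.card_fin]
      omega
    · intro x hx _ _ _; exact mem_compl.mpr hx
    · rw [ha0, rrState]; simp
    · rw [ha0, rrState]
      show univ = (Ico 0 q).image (hF n hm0) ∪ (Hs n q hm0)ᶜ
      rw [← range_eq_Ico]
      show univ = Hs n q hm0 ∪ (Hs n q hm0)ᶜ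
      rw [union_compl]
  | succ s ih =>
    intro hs1
    have hsm : s < m := hs1
    obtain ⟨N, hNH, hNcard, hNcl, hA0, hR⟩ := ih (le_of_lt hsm)
    set a := (s + n - 1) / n with hadef
    have ha_le_s : a ≤ s := adiv_le_self n s hn0
    have ha_le_q : a ≤ q := by
      have h := adiv_mono n s m (le_of_lt hsm)
      rw [hq] at h
      exact h
    have hbbound : (s + 1) - ((s + 1) + n - 1) / n ≤ m - q := by
      have h := bfun_mono n hn0 hs1
      simp only at h
      rw [hq] at h
      exact h
    -- agent 0's bundle is disjoint from the remaining set
    have hdisj : ∀ g ∈ (rrState F s).2, g ∉ (rrState F s).1 ⟨0, hn0⟩ := by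
      rw [hR, hA0]
      intro g hg hg'
      rw [mem_image] at hg'
      obtain ⟨t', ht', rfl⟩ := hg'
      rw [mem_range] at ht'
      rcases mem_union.mp hg with hg2 | hg2
      · rw [mem_image] at hg2
        obtain ⟨t, ht, he⟩ := hg2
        rw [mem_Ico] at ht
        have := hF_injOn hn hq2 hm0 (by simp [mem_range]; omega : (t : ℕ) ∈ (range q : Finset ℕ))
          (by simp [mem_range]; omega : (t' : ℕ) ∈ (range q : Finset ℕ)) he
        omega
      · exact hNH _ hg2 (mem_Hs_of hm0 (by omega))
    by_cases hmod : s % n = 0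
    · -- agent 0's turn: picks hF a
      obtain ⟨hna, hasucc⟩ := adiv_pick n s hn0 hmod
      rw [← hadef] at hna hasucc
      have haq : a < q := by
        by_contra hc
        push_neg at hc
        have h1 : n * q ≤ n * a := Nat.mul_le_mul_left n hc
        have h2 : q * n = n * q := Nat.mul_comm q n
        omega
      have hFaR : hF n hm0 a ∈ (rrState F s).2 := by
        rw [hR]
        exact mem_union_left _ (mem_image_of_mem _ (mem_Ico.mpr ⟨le_rfl, haq⟩))
      have hne : (rrState F s).2.Nonempty := ⟨_, hFaR⟩
      have hi : (⟨s % n, Nat.mod_lt s hn0⟩ : Fin n) = ⟨0, hn0⟩ := Fin.ext hmod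
      have hscore : ∀ g ∈ (rrState F s).2,
          F ⟨0, hn0⟩ ((rrState F s).1 ⟨0, hn0⟩) g = wH n q hm0 g := by
        intro g hg
        have hg' := hdisj g hg
        show V ⟨0, hn0⟩ (insert g _) - V ⟨0, hn0⟩ _ = _
        rw [hVdef, Function.update_self, addVal, addVal, Finset.sum_insert hg',
          add_sub_cancel_right]
      rw [rrState_succ F s hn0 hne]
      have hwa : wH n q hm0 (hF n hm0 a) = 1 := by
        rw [wH, if_pos (mem_Hs_of hm0 haq)]
      have hpick : chooseFavorite
          (F ⟨s % n, Nat.mod_lt s hn0⟩ ((rrState F s).1 ⟨s % n, Nat.mod_lt s hn0⟩))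
          (rrState F s).2 hne = hF n hm0 a := by
        rw [hi]
        apply chooseFavorite_eq hFaR
        · intro g hg
          rw [hscore g hg, hscore _ hFaR, hwa]
          exact wH_le_one hm0 g
        · intro g hg hgmax
          have h1 : (1:ℝ) ≤ wH n q hm0 g := by
            have := hgmax _ hFaR
            rw [hscore _ hFaR, hscore g hg, hwa] at this
            exact this
          have hgH : g ∈ Hs n q hm0 := by
            by_contra hc
            rw [wH, if_neg hc] at h1
            norm_num at h1
          rw [hR] at hg
          rcases mem_union.mp hg with hg2 | hg2
          · rw [mem_image] at hg2
            obtain ⟨t, ht, rfl⟩ := hg2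
            rw [mem_Ico] at ht
            rw [Fin.le_def]
            exact hN_le hn hq2 ht.1 ht.2
          · exact absurd hgH (hNH g hg2)
      rw [hpick]
      refine ⟨N, hNH, ?_, hNcl, ?_, ?_⟩
      · rw [hasucc]; omega
      · dsimp only
        rw [hi, Function.update_self, hA0, hasucc, range_add_one, image_insert]
      · show ((rrState F s).2.erase (hF n hm0 a)) = _
        rw [hR, hasucc]
        ext g
        simp only [mem_erase, mem_union, mem_image, mem_Ico]
        constructor
        · rintro ⟨hne', (⟨t, ⟨hat, htq⟩, rfl⟩ | hgN)⟩
          · left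
            refine ⟨t, ⟨?_, htq⟩, rfl⟩
            rcases eq_or_lt_of_le hat with rfl | h'
            · exact absurd rfl hne'
            · omega
          · right; exact hgN
        · rintro (⟨t, ⟨hat, htq⟩, rfl⟩ | hgN)
          · refine ⟨?_, Or.inl ⟨t, ⟨by omega, htq⟩, rfl⟩⟩
            intro he
            have := hF_injOn hn hq2 hm0
              (by simp [mem_range]; omega : (t : ℕ) ∈ (range q : Finset ℕ))
              (by simp [mem_range]; omega : (a : ℕ) ∈ (range q : Finset ℕ)) he
            omega
          · refine ⟨?_, Or.inr hgN⟩
            intro he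
            exact hNH g hgN (he ▸ mem_Hs_of hm0 haq)
    · -- another agent's turn: picks the minimum of N
      have hasucc : ((s + 1) + n - 1) / n = a := adiv_other n s hn0 hmod
      rw [hasucc] at hbbound
      have hNne : N.Nonempty := by
        rw [← card_pos]
        omega
      have hg0N : N.min' hNne ∈ N := min'_mem _ _
      have hg0R : N.min' hNne ∈ (rrState F s).2 := by
        rw [hR]; exact mem_union_right _ hg0N
      have hne : (rrState F s).2.Nonempty := ⟨_, hg0R⟩
      have hi : (⟨s % n, Nat.mod_lt s hn0⟩ : Fin n) ≠ ⟨0, hn0⟩ := by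
        intro hcon
        exact hmod (congrArg Fin.val hcon)
      have hscore : ∀ (A : Finset (Fin m)) (g : Fin m),
          F ⟨s % n, Nat.mod_lt s hn0⟩ A g = 0 := by
        intro A g
        show V _ (insert g A) - V _ A = 0
        rw [hVdef, Function.update_of_ne hi, prof, if_neg hi, sub_self]
      -- the key counting argument
      have hkey : ∀ t, a ≤ t → t < q → ∃ y ∈ N, y.val < hN n m a := by
        intro t hat htq
        have haq : a < q := by omega
        by_contra hcon
        push_neg at hcon
        have hCsub : (univ.filter (fun g : Fin m => g.val < hN n m a ∧ g ∉ Hs n q hm0)) ⊆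
            (univ.filter (fun g : Fin m => g ∉ Hs n q hm0)) \ N := by
          intro x hx
          rw [mem_filter] at hx
          rw [mem_sdiff, mem_filter]
          refine ⟨⟨mem_univ x, hx.2.2⟩, ?_⟩
          intro hxN
          have := hcon x hxN
          omega
        have hcard1 : (univ.filter (fun g : Fin m => g ∉ Hs n q hm0)).card = m - q := by
          have he : univ.filter (fun g : Fin m => g ∉ Hs n q hm0) = (Hs n q hm0)ᶜ := by
            ext x; simp
          rw [he, card_compl, card_Hs hn hq2 hm0, Fintype.card_fin]
        have hsubN : N ⊆ univ.filter (fun g : Fin m => g ∉ Hs n q hm0) := by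
          intro x hx
          exact mem_filter.mpr ⟨mem_univ x, hNH x hx⟩
        have hcard2 : ((univ.filter (fun g : Fin m => g ∉ Hs n q hm0)) \ N).card
            = (m - q) - N.card := by
          rw [card_sdiff_of_subset hsubN, hcard1]
        have hcardC : (univ.filter (fun g : Fin m => g.val < hN n m a ∧ g ∉ Hs n q hm0)).card
            = hN n m a - a := by
          have he : univ.filter (fun g : Fin m => g.val < hN n m a ∧ g ∉ Hs n q hm0)
              = (univ.filter (fun g : Fin m => g.val < hN n m a)) \
                ((Hs n q hm0).filter (fun g => g.val < hN n m a)) := by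
            ext x
            simp only [mem_filter, mem_sdiff, mem_univ, true_and]
            tauto
          have hsub2 : (Hs n q hm0).filter (fun g => g.val < hN n m a) ⊆
              univ.filter (fun g : Fin m => g.val < hN n m a) := by
            intro x hx
            rw [mem_filter] at hx
            exact mem_filter.mpr ⟨mem_univ x, hx.2⟩
          have hcIio : (univ.filter (fun g : Fin m => g.val < hN n m a)).card = hN n m a := by
            have he2 : univ.filter (fun g : Fin m => g.val < hN n m a)
                = Finset.Iio (⟨hN n m a, hN_lt_m a hm0⟩ : Fin m) := by
              ext x; simp [Fin.lt_def]
            rw [he2, Fin.card_Iio]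
          have hcHa : ((Hs n q hm0).filter (fun g => g.val < hN n m a)).card = a := by
            rw [Hs_filter_lt hn hq2 hm0 haq,
              card_image_of_injOn ((hF_injOn hn hq2 hm0).mono (by
                intro x hx
                simp only [coe_range, Set.mem_Iio] at hx ⊢
                omega)), card_range]
          rw [he, card_sdiff_of_subset hsub2, hcIio, hcHa]
        have hle := card_le_card hCsub
        rw [hcardC, hcard2] at hle
        -- now derive a contradiction
        have h5 : s ≤ n * a := by
          rw [hadef]
          exact s_le_n_mul_adiv n s hn0
        rcases Nat.lt_or_ge (a + 1) q with hc1 | hc1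
        · have h1 : (a + 2) * n ≤ q * n := Nat.mul_le_mul_right n (by omega)
          have h2 : (a + 2) * n = (a + 1) * n + n := by ring
          have h3 : (a + 1) * n ≤ m := by omega
          have h4 : hN n m a = (a + 1) * n - 1 := hN_eq_of h3
          have h6 : (a + 1) * n = n * a + n := by ring
          omega
        · have hc2 : a + 1 = q := by omega
          have h3 : m ≤ (a + 1) * n := by
            have : (a + 1) * n = q * n := by rw [hc2]
            omega
          have h4 : hN n m a = m - 1 := hN_eq_last h3
          omega
      rw [rrState_succ F s hn0 hne]
      have hpick : chooseFavorite
          (F ⟨s % n, Nat.mod_lt s hn0⟩ ((rrState F s).1 ⟨s % n, Nat.mod_lt s hn0⟩))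
          (rrState F s).2 hne = N.min' hNne := by
        apply chooseFavorite_eq hg0R
        · intro g hg; rw [hscore, hscore]
        · intro g hg _
          rw [hR] at hg
          rcases mem_union.mp hg with hg2 | hg2
          · rw [mem_image] at hg2
            obtain ⟨t, ht, rfl⟩ := hg2
            rw [mem_Ico] at ht
            obtain ⟨y, hyN, hylt⟩ := hkey t ht.1 ht.2
            calc N.min' hNne ≤ y := min'_le _ _ hyN
              _ ≤ hF n hm0 t := by
                rw [Fin.le_def]
                have h1 : hN n m a ≤ hN n m t := hN_le hn hq2 ht.1 ht.2
                exact le_trans (le_of_lt hylt) h1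
          · exact min'_le _ _ hg2
      rw [hpick]
      refine ⟨N.erase (N.min' hNne), ?_, ?_, ?_, ?_, ?_⟩
      · intro g hg; exact hNH g (mem_of_mem_erase hg)
      · rw [card_erase_of_mem hg0N, hasucc]
        have hNpos : 1 ≤ N.card := card_pos.mpr hNne
        omega
      · intro x hx y hy hyx
        have hyN := mem_of_mem_erase hy
        have hxN : x ∈ N := hNcl x hx y hyN hyx
        rw [mem_erase]
        refine ⟨?_, hxN⟩
        intro hxg
        have hle1 : N.min' hNne ≤ y := min'_le _ _ hyN
        have : y = N.min' hNne := le_antisymm (hxg ▸ hyx) hle1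
        exact (mem_erase.mp hy).1 this
      · dsimp only
        rw [Function.update_of_ne (Ne.symm hi), hA0, hasucc]
      · show ((rrState F s).2.erase (N.min' hNne)) = _
        rw [hR, hasucc]
        ext g
        simp only [mem_erase, mem_union, mem_image, mem_Ico]
        constructor
        · rintro ⟨hne', (h | h)⟩
          · exact Or.inl h
          · exact Or.inr ⟨hne', h⟩
        · rintro (⟨t, ht, rfl⟩ | ⟨hne', h⟩)
          · refine ⟨?_, Or.inl ⟨t, ht, rfl⟩⟩
            intro he
            exact hNH _ hg0N (he ▸ mem_Hs_of hm0 ht.2)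
          · exact ⟨hne', Or.inr h⟩

end RRX
namespace RRX
open Finset

lemma v1_T_eq {n m q : ℕ} (hn : 2 ≤ n) (hmn : n ≤ m) (hq1 : m ≤ q * n)
    (hq2 : q * n < m + n) (hm0 : 0 < m) :
    v1 n q hm0 (univ.filter (fun g : Fin m => g.val < m ∧ g.val % n = 0)) = 1 := by
  apply v1_eq_one hm0
  · exact mem_filter.mpr ⟨mem_univ _, by simpa using hm0⟩
  · apply card_filter_singleton_le _ _ (⟨m - 1, by omega⟩ : Fin m)
    intro y hy hyH
    rw [mem_filter] at hy
    have := mem_Hs_mod hn hq1 hq2 hm0 hyH hy.2.2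
    exact Fin.ext this

end RRX

/-- Lower bound of ⌈m/n⌉ on the incentive ratio of Mechanism 2 for XOS valuations:
for all n ≥ 2 and m ≥ n there is an XOS profile and an additive misreport for agent 1
such that agent 1's truthful utility is 1 while his utility after misreporting is
⌈m/n⌉. -/
theorem roundRobin2_xos_lower_bound {n m : ℕ} (hn : 2 ≤ n) (hm : n ≤ m) :
    ∃ (v : Fin n → Finset (Fin m) → ℝ) (v1' : Finset (Fin m) → ℝ),
      (∀ j, IsValuation (v j) ∧ XOSVal (v j)) ∧
      IsValuation v1' ∧ AdditiveVal v1' ∧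
      v ⟨0, by omega⟩ (roundRobin2 v ⟨0, by omega⟩) = 1 ∧
      v ⟨0, by omega⟩
          (roundRobin2 (Function.update v ⟨0, by omega⟩ v1') ⟨0, by omega⟩) =
        (((m + n - 1) / n : ℕ) : ℝ) := by
  have hn0 : 0 < n := by omega
  have hm0 : 0 < m := by omega
  have h1 : m ≤ n * ((m + n - 1) / n) := RRX.s_le_n_mul_adiv n m hn0
  have h2 : (m + n - 1) / n * n ≤ m + n - 1 := Nat.div_mul_le_self (m + n - 1) n
  set q := (m + n - 1) / n with hqdef
  have hq : (m + n - 1) / n = q := hqdef.symm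
  have hcomm : q * n = n * q := Nat.mul_comm q n
  have hq1 : m ≤ q * n := by omega
  have hq2 : q * n < m + n := by omega
  refine ⟨RRX.prof q hn0 hm0, addVal (RRX.wH n q hm0), ?_, ?_, ?_, ?_, ?_⟩
  · -- valuations are normalized, monotone, XOS
    intro j
    by_cases hj : j = ⟨0, hn0⟩
    · rw [RRX.prof, if_pos hj]
      exact ⟨RRX.v1_isValuation hm0, RRX.v1_xos hm0⟩
    · rw [RRX.prof, if_neg hj]
      exact ⟨RRX.zero_isValuation, RRX.zero_xos⟩
  · -- the misreport is a valuation
    constructor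
    · simp [addVal]
    · intro S T h
      apply RRX.addVal_mono _ h
      intro g
      rw [RRX.wH]
      positivity
  · exact RRX.addVal_additive _
  · -- truthful utility is 1
    show RRX.prof q hn0 hm0 ⟨0, hn0⟩
        (roundRobin2 (RRX.prof q hn0 hm0) ⟨0, hn0⟩) = 1
    rw [roundRobin2]
    rw [(RRX.truthful_run hn hm hq1 hq2 hn0 hm0 m le_rfl).2]
    rw [RRX.prof, if_pos rfl]
    exact RRX.v1_T_eq hn hm hq1 hq2 hm0
  · -- utility from misreporting is q
    show RRX.prof q hn0 hm0 ⟨0, hn0⟩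
        (roundRobin2
          (Function.update (RRX.prof q hn0 hm0) ⟨0, hn0⟩ (addVal (RRX.wH n q hm0)))
          ⟨0, hn0⟩) = ((q : ℕ) : ℝ)
    rw [roundRobin2]
    obtain ⟨N, _, _, _, hA0, _⟩ :=
      RRX.misreport_run hn hm hq1 hq2 hq hn0 hm0 m le_rfl
    rw [hA0, hq]
    rw [RRX.prof, if_pos rfl]
    show RRX.v1 n q hm0 (RRX.Hs n q hm0) = _
    exact RRX.v1_Hs_eq hn hm hq2 hm0
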